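/- (Technical lifting lemma, Lemma 4.9.) Let 1 ≤ p < ∞ and let θ ∈ L^p(0,1). Then there exists a measurable function ψ : W → ℝ such that: (1) ψ(x,y₁,y₂) does not depend on y₁, i.e. ψ(x,y₁,y₂) = ψ(x,y₁',y₂) whenever both points lie in W; (2) ψ(x,y₁,y₂) = 0 whenever y₂ ≥ G_0; (3) for every x ∈ (0,1), (1/l(x)) ∫_{Y*(x)} ψ(x,y₁,y₂) dy₁ dy₂ = θ(x); (4) ‖ψ‖_{L^p(W)} ≤ C ‖θ‖_{L^p(0,1)} for a constant C depending only on G_0, l_1 and p. Indeed one may take ψ(x,y₁,y₂) = (12/G_0³)·ṽ(y₂)·θ(x), where v(y₂) = −y₂²/2 + G_0 y₂/2 and ṽ equals v on (0,G_0) and 0 elsewhere. -/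

import Mathlib

open MeasureTheory Set Filter Topology

noncomputable section

/-- The thin domain `R^ε = {(x,y) : x ∈ (0,1), 0 < y < ε G(x, x/ε)}`. -/
def thinDomain (G : ℝ → ℝ → ℝ) (ε : ℝ) : Set (ℝ × ℝ) :=
  {z : ℝ × ℝ | z.1 ∈ Ioo (0 : ℝ) 1 ∧ z.2 ∈ Ioo (0 : ℝ) (ε * G z.1 (z.1 / ε))}

/-- The reference cell `Y* = (0,l₁) × (0,G₁)`. -/
def Ystar (l1 G1 : ℝ) : Set (ℝ × ℝ) := Ioo (0 : ℝ) l1 ×ˢ Ioo (0 : ℝ) G1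

/-- A partition `0 = x₀ < x₁ < ⋯ < x_{N+1} = 1` of the interval `(0,1)` (for a parameter `ε`). -/
structure MeshPartition where
  N : ℕ
  pts : ℕ → ℝ
  pts_zero : pts 0 = 0
  pts_last : pts (N + 1) = 1
  pts_lt : ∀ k ≤ N, pts k < pts (k + 1)

/-- The index `k` such that `x ∈ [x_k, x_{k+1})` (for `x ∈ [0,1)`). -/
def MeshPartition.idx (P : MeshPartition) (x : ℝ) : ℕ :=
  Nat.findGreatest (fun k => P.pts k ≤ x) P.N

/-- `[x]_ε`, the partition point just below `x`. -/
def MeshPartition.bracket (P : MeshPartition) (x : ℝ) : ℝ := P.pts (P.idx x)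

/-- `Γ_{[x]_ε} = (x_{k+1} - x_k) / l(x_k)` for `x ∈ [x_k, x_{k+1})`. -/
def MeshPartition.Gamma (P : MeshPartition) (l : ℝ → ℝ) (x : ℝ) : ℝ :=
  (P.pts (P.idx x + 1) - P.pts (P.idx x)) / l (P.pts (P.idx x))

/-- The unfolding operator `T_ε` associated to a partition, acting on a function `φ` on `R^ε`
(extended by zero to all of `ℝ²` via the indicator of `R^ε`). -/
def unfoldOp (G : ℝ → ℝ → ℝ) (l : ℝ → ℝ) (ε : ℝ) (P : MeshPartition)
    (φ : ℝ × ℝ → ℝ) : ℝ × ℝ × ℝ → ℝ := fun q =>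
  if q.2.1 < l (P.bracket q.1) then
    (thinDomain G ε).indicator φ (P.bracket q.1 + P.Gamma l q.1 * q.2.1, ε * q.2.2)
  else 0

/-- The averaging operator `U_ε`, the formal adjoint of `T_ε`. -/
def avgOp (l : ℝ → ℝ) (ε : ℝ) (P : MeshPartition) (ψ : ℝ × ℝ × ℝ → ℝ) : ℝ × ℝ → ℝ := fun z =>
  (1 / l (P.bracket z.1)) *
    ∫ y₁ in Ioo (0 : ℝ) (l (P.bracket z.1)),
      ψ (P.bracket z.1 + P.Gamma l z.1 * y₁, (z.1 - P.bracket z.1) / P.Gamma l z.1, z.2 / ε)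

/-- The limit set `W = {(x,y₁,y₂) : x ∈ (0,1), 0 < y₁ < l(x), 0 < y₂ < G(x,y₁)}`. -/
def Wset (G : ℝ → ℝ → ℝ) (l : ℝ → ℝ) : Set (ℝ × ℝ × ℝ) :=
  {q | q.1 ∈ Ioo (0 : ℝ) 1 ∧ q.2.1 ∈ Ioo (0 : ℝ) (l q.1) ∧ q.2.2 ∈ Ioo (0 : ℝ) (G q.1 q.2.1)}

/-- The set `W₀ = {(x,y₁) : x ∈ (0,1), 0 < y₁ < l(x)}`. -/
def W0set (l : ℝ → ℝ) : Set (ℝ × ℝ) :=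
  {z : ℝ × ℝ | z.1 ∈ Ioo (0 : ℝ) 1 ∧ z.2 ∈ Ioo (0 : ℝ) (l z.1)}

/-- Technical lifting lemma (Lemma 4.9). -/
theorem technical_lifting_lemma
    (l0 l1 G0 G1 : ℝ) (hl0 : 0 < l0) (hl01 : l0 < l1) (hG0 : 0 < G0) (hG01 : G0 ≤ G1)
    (l : ℝ → ℝ) (hlC1 : ContDiffOn ℝ 1 l (Ioo 0 1))
    (hlb : ∀ x ∈ Icc (0 : ℝ) 1, l0 ≤ l x ∧ l x < l1)
    (G : ℝ → ℝ → ℝ)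
    (hGcont : ContinuousOn (fun z : ℝ × ℝ => G z.1 z.2) (Ioo 0 1 ×ˢ (univ : Set ℝ)))
    (hGb : ∀ x ∈ Ioo (0 : ℝ) 1, ∀ y : ℝ, G0 ≤ G x y ∧ G x y ≤ G1)
    (hGper : ∀ x ∈ Ioo (0 : ℝ) 1, ∀ y : ℝ, G x (y + l x) = G x y)
    (p : ℝ) (hp : 1 ≤ p) :
    ∃ C : ℝ, 0 < C ∧
      ∀ θ : ℝ → ℝ, Measurable θ →
        MemLp θ (ENNReal.ofReal p) (volume.restrict (Ioo (0 : ℝ) 1)) →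
        ∃ ψ : ℝ × ℝ × ℝ → ℝ, Measurable ψ ∧
          -- (1) ψ does not depend on y₁
          (∀ q q' : ℝ × ℝ × ℝ, q ∈ Wset G l → q' ∈ Wset G l →
            q.1 = q'.1 → q.2.2 = q'.2.2 → ψ q = ψ q') ∧
          -- (2) ψ vanishes for y₂ ≥ G₀
          (∀ q : ℝ × ℝ × ℝ, G0 ≤ q.2.2 → ψ q = 0) ∧
          -- (3) the average over the cell Y*(x) recovers θ
          (∀ x ∈ Ioo (0 : ℝ) 1,
            (1 / l x) *
              (∫ y in {y : ℝ × ℝ | y.1 ∈ Ioo (0 : ℝ) (l x) ∧ y.2 ∈ Ioo (0 : ℝ) (G x y.1)},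
                ψ (x, y.1, y.2)) = θ x) ∧
          -- (4) L^p bound
          (∫ q in Wset G l, |ψ q| ^ p) ^ (1 / p)
            ≤ C * (∫ x in Ioo (0 : ℝ) 1, |θ x| ^ p) ^ (1 / p) ∧
          -- explicit formula: ψ(x,y₁,y₂) = (12/G₀³)·ṽ(y₂)·θ(x)
          ψ = fun q =>
            (12 / G0 ^ 3) *
              (if q.2.2 ∈ Ioo (0 : ℝ) G0 then -q.2.2 ^ 2 / 2 + G0 * q.2.2 / 2 else 0) *
              θ q.1 := by
  classical
  have hppos : (0:ℝ) < p := lt_of_lt_of_le one_pos hp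
  have hpne : p ≠ 0 := ne_of_gt hppos
  have hl1pos : (0:ℝ) < l1 := hl0.trans hl01
  have hG1pos : (0:ℝ) < G1 := lt_of_lt_of_le hG0 hG01
  set K : ℝ := 3 / (2 * G0) with hKdef
  have hKpos : 0 < K := by positivity
  refine ⟨K * (l1 * G1) ^ (1/p), by positivity, ?_⟩
  intro θ hθ hθLp
  set vfun : ℝ → ℝ := fun y => if y ∈ Ioo (0:ℝ) G0 then -y ^ 2 / 2 + G0 * y / 2 else 0
    with hvdef
  have hv0 : ∀ y, 0 ≤ vfun y := by
    intro y; rw [hvdef]; dsimp only; split_ifs with h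
    · obtain ⟨h1, h2⟩ := h; nlinarith
    · exact le_rfl
  have hvle : ∀ y, vfun y ≤ G0 ^ 2 / 8 := by
    intro y; rw [hvdef]; dsimp only; split_ifs with h
    · obtain ⟨h1, h2⟩ := h; nlinarith [sq_nonneg (G0 - 2 * y)]
    · positivity
  have hvmeas : Measurable vfun := by
    rw [hvdef]; exact Measurable.ite measurableSet_Ioo (by fun_prop) measurable_const
  set ψ : ℝ × ℝ × ℝ → ℝ := fun q => (12 / G0 ^ 3) * vfun q.2.2 * θ q.1 with hψdef
  have hψmeas : Measurable ψ := by
    rw [hψdef]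
    exact (measurable_const.mul (hvmeas.comp (measurable_snd.comp measurable_snd))).mul
      (hθ.comp measurable_fst)
  -- pointwise bound
  have hcv : ∀ y, 12 / G0 ^ 3 * vfun y ≤ K := by
    intro y
    have h1 : 12 / G0 ^ 3 * vfun y ≤ 12 / G0 ^ 3 * (G0 ^ 2 / 8) :=
      mul_le_mul_of_nonneg_left (hvle y) (by positivity)
    have h2 : 12 / G0 ^ 3 * (G0 ^ 2 / 8) = K := by
      rw [hKdef]; field_simp; ring
    linarith
  have habs : ∀ q, |ψ q| ≤ K * |θ q.1| := by
    intro q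
    have : |ψ q| = (12 / G0 ^ 3 * vfun q.2.2) * |θ q.1| := by
      rw [hψdef]; dsimp only
      rw [abs_mul, abs_of_nonneg (mul_nonneg (by positivity) (hv0 _))]
    rw [this]
    exact mul_le_mul_of_nonneg_right (hcv _) (abs_nonneg _)
  -- integral of vfun
  have hint_v : ∫ y in Ioo (0:ℝ) G0, vfun y = G0 ^ 3 / 12 := by
    have hcongr : ∫ y in Ioo (0:ℝ) G0, vfun y
        = ∫ y in Ioo (0:ℝ) G0, (-y ^ 2 / 2 + G0 * y / 2) := by
      refine setIntegral_congr_fun measurableSet_Ioo (fun y hy => ?_)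
      rw [hvdef]; exact if_pos hy
    rw [hcongr, ← integral_Ioc_eq_integral_Ioo, ← intervalIntegral.integral_of_le hG0.le]
    have hderiv : ∀ y ∈ uIcc (0:ℝ) G0,
        HasDerivAt (fun y : ℝ => -y ^ 3 / 6 + G0 * y ^ 2 / 4) (-y ^ 2 / 2 + G0 * y / 2) y := by
      intro y _
      have h1 := ((hasDerivAt_pow 3 y).neg.div_const 6).add
        (((hasDerivAt_pow 2 y).const_mul G0).div_const 4)
      convert h1 using 1
      · rfl
      · rfl
      · funext z; simp [neg_div]
      norm_num
      ring
    have hci : Continuous fun y : ℝ => -y ^ 2 / 2 + G0 * y / 2 := by fun_prop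
    rw [intervalIntegral.integral_eq_sub_of_hasDerivAt hderiv (hci.intervalIntegrable 0 G0)]
    ring
  refine ⟨ψ, hψmeas, ?_, ?_, ?_, ?_, ?_⟩
  · -- (1)
    intro q q' _ _ h1 h2
    rw [hψdef]; dsimp only; rw [h1, h2]
  · -- (2)
    intro q hq
    rw [hψdef]; dsimp only
    have : vfun q.2.2 = 0 := by
      rw [hvdef]; exact if_neg (fun h => absurd hq (not_le.mpr h.2))
    rw [this]; ring
  · -- (3)
    intro x hx
    have hlx : 0 < l x := lt_of_lt_of_le hl0 (hlb x (Ioo_subset_Icc_self hx)).1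
    have hGx : Continuous fun y : ℝ => G x y := by
      rw [continuous_iff_continuousAt]
      intro y
      have hopen : IsOpen (Ioo (0:ℝ) 1 ×ˢ (univ : Set ℝ)) := isOpen_Ioo.prod isOpen_univ
      have := hGcont.continuousAt (hopen.mem_nhds ⟨hx, trivial⟩ : _ ∈ 𝓝 (x, y))
      exact this.comp (Continuous.prodMk_right x).continuousAt
    set S : Set (ℝ × ℝ) := {y : ℝ × ℝ | y.1 ∈ Ioo (0:ℝ) (l x) ∧ y.2 ∈ Ioo (0:ℝ) (G x y.1)}
      with hSdef
    have hSopen : IsOpen S := by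
      have hS' : S = (Ioo (0:ℝ) (l x) ×ˢ (univ : Set ℝ)) ∩ (fun y : ℝ × ℝ => y.2) ⁻¹' Ioi 0
          ∩ (fun y : ℝ × ℝ => G x y.1 - y.2) ⁻¹' Ioi 0 := by
        ext y
        simp only [hSdef, Set.mem_setOf_eq, Set.mem_inter_iff, Set.mem_prod, Set.mem_preimage,
          Set.mem_Ioo, Set.mem_Ioi, Set.mem_univ, and_true, sub_pos]
        tauto
      rw [hS']
      exact ((isOpen_Ioo.prod isOpen_univ).inter (isOpen_Ioi.preimage continuous_snd)).inter
        (isOpen_Ioi.preimage ((hGx.comp continuous_fst).sub continuous_snd))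
    have hsub : Ioo (0:ℝ) (l x) ×ˢ Ioo (0:ℝ) G0 ⊆ S := by
      rintro ⟨y1, y2⟩ ⟨h1, h2⟩
      exact ⟨h1, h2.1, lt_of_lt_of_le h2.2 (hGb x hx y1).1⟩
    have hzero : ∀ y ∈ S \ Ioo (0:ℝ) (l x) ×ˢ Ioo (0:ℝ) G0, ψ (x, y.1, y.2) = 0 := by
      rintro ⟨y1, y2⟩ ⟨hyS, hyT⟩
      have hy1 : y1 ∈ Ioo (0:ℝ) (l x) := hyS.1
      have hy2 : y2 ∉ Ioo (0:ℝ) G0 := by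
        intro h; exact hyT ⟨hy1, h⟩
      rw [hψdef]; dsimp only
      rw [hvdef]; dsimp only
      rw [if_neg hy2]; ring
    rw [setIntegral_eq_of_subset_of_forall_diff_eq_zero hSopen.measurableSet hsub hzero]
    have hre : ∫ y in Ioo (0:ℝ) (l x) ×ˢ Ioo (0:ℝ) G0, ψ (x, y.1, y.2)
        = ∫ y in Ioo (0:ℝ) (l x) ×ˢ Ioo (0:ℝ) G0,
            (fun _ : ℝ => 12 / G0 ^ 3 * θ x) y.1 * vfun y.2 := by
      refine integral_congr_ae (Eventually.of_forall fun y => ?_)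
      rw [hψdef]; dsimp only; ring
    have hpm : ∫ y : ℝ × ℝ in Ioo (0:ℝ) (l x) ×ˢ Ioo (0:ℝ) G0,
          (fun _ : ℝ => 12 / G0 ^ 3 * θ x) y.1 * vfun y.2
        = (∫ y in Ioo (0:ℝ) (l x), 12 / G0 ^ 3 * θ x) * ∫ y in Ioo (0:ℝ) G0, vfun y := by
      rw [Measure.volume_eq_prod]
      exact setIntegral_prod_mul (fun _ : ℝ => 12 / G0 ^ 3 * θ x) vfun _ _
    rw [hre, hpm, hint_v, setIntegral_const, measureReal_def, Real.volume_Ioo, sub_zero,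
      ENNReal.toReal_ofReal hlx.le, smul_eq_mul]
    field_simp
  · -- (4)
    set I : ℝ := ∫ x in Ioo (0:ℝ) 1, |θ x| ^ p with hIdef
    have hI0 : 0 ≤ I := integral_nonneg fun x => by positivity
    set P : Set (ℝ × ℝ × ℝ) := Ioo (0:ℝ) 1 ×ˢ (Ioo (0:ℝ) l1 ×ˢ Ioo (0:ℝ) G1) with hPdef
    have hWP : Wset G l ⊆ P := by
      rintro ⟨x, y1, y2⟩ ⟨hx, hy1, hy2⟩
      have hx' : x ∈ Icc (0:ℝ) 1 := Ioo_subset_Icc_self hx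
      exact ⟨hx, ⟨hy1.1, hy1.2.trans (hlb x hx').2⟩,
        ⟨hy2.1, lt_of_lt_of_le hy2.2 (hGb x hx y1).2⟩⟩
    -- integrability of the dominating function on P
    have hθp : Integrable (fun x => |θ x| ^ p) (volume.restrict (Ioo (0:ℝ) 1)) := by
      have := hθLp.integrable_norm_rpow (ENNReal.ofReal_pos.mpr hppos).ne' (by simp)
      simpa [Real.norm_eq_abs, ENNReal.toReal_ofReal hppos.le] using this
    have hPrestrict : (volume : Measure (ℝ × ℝ × ℝ)).restrict P
        = (volume.restrict (Ioo (0:ℝ) 1)).prod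
            (volume.restrict (Ioo (0:ℝ) l1 ×ˢ Ioo (0:ℝ) G1)) := by
      rw [hPdef, Measure.volume_eq_prod, Measure.prod_restrict]
    have hfin : (volume (Ioo (0:ℝ) l1 ×ˢ Ioo (0:ℝ) G1)) < ⊤ := by
      rw [Measure.volume_eq_prod, Measure.prod_prod, Real.volume_Ioo, Real.volume_Ioo]
      exact ENNReal.mul_lt_top ENNReal.ofReal_lt_top ENNReal.ofReal_lt_top
    haveI : IsFiniteMeasure (volume.restrict (Ioo (0:ℝ) l1 ×ˢ Ioo (0:ℝ) G1)) := by
      constructor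
      rw [Measure.restrict_apply_univ]
      exact hfin
    have hgint : IntegrableOn (fun q : ℝ × ℝ × ℝ => (K * |θ q.1|) ^ p) P := by
      have h1 : Integrable (fun x : ℝ => (K * |θ x|) ^ p) (volume.restrict (Ioo (0:ℝ) 1)) := by
        have : (fun x : ℝ => (K * |θ x|) ^ p) = fun x => K ^ p * |θ x| ^ p := by
          funext x; rw [Real.mul_rpow hKpos.le (abs_nonneg _)]
        rw [this]
        exact hθp.const_mul _
      have := h1.mul_prod (integrable_const (1:ℝ)
        (μ := volume.restrict (Ioo (0:ℝ) l1 ×ˢ Ioo (0:ℝ) G1)))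
      rw [IntegrableOn, hPrestrict]
      simpa using this
    have hψpmeas : Measurable fun q : ℝ × ℝ × ℝ => |ψ q| ^ p :=
      (Real.continuous_rpow_const hppos.le).measurable.comp hψmeas.abs
    have hle : ∀ q : ℝ × ℝ × ℝ, |ψ q| ^ p ≤ (K * |θ q.1|) ^ p := fun q =>
      Real.rpow_le_rpow (abs_nonneg _) (habs q) hppos.le
    have hψint : IntegrableOn (fun q : ℝ × ℝ × ℝ => |ψ q| ^ p) P := by
      refine hgint.mono' (hψpmeas.aestronglyMeasurable) ?_
      refine Eventually.of_forall fun q => ?_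
      rw [Real.norm_eq_abs, abs_of_nonneg (by positivity : (0:ℝ) ≤ |ψ q| ^ p)]
      exact hle q
    have step1 : ∫ q in Wset G l, |ψ q| ^ p ≤ ∫ q in P, |ψ q| ^ p :=
      setIntegral_mono_set hψint (Eventually.of_forall fun q => by positivity)
        (HasSubset.Subset.eventuallyLE hWP)
    have step2 : ∫ q in P, |ψ q| ^ p ≤ ∫ q in P, (K * |θ q.1|) ^ p :=
      integral_mono hψint hgint hle
    have step3 : ∫ q in P, (K * |θ q.1|) ^ p = K ^ p * I * (l1 * G1) := by
      have hre : ∫ q in P, (K * |θ q.1|) ^ p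
          = ∫ q in P, (fun x : ℝ => K ^ p * |θ x| ^ p) q.1 * (fun _ : ℝ × ℝ => (1:ℝ)) q.2 := by
        refine integral_congr_ae (Eventually.of_forall fun q => ?_)
        dsimp only
        rw [Real.mul_rpow hKpos.le (abs_nonneg _)]; ring
      have hpm : ∫ q in P, (fun x : ℝ => K ^ p * |θ x| ^ p) q.1 * (fun _ : ℝ × ℝ => (1:ℝ)) q.2
          = (∫ x in Ioo (0:ℝ) 1, K ^ p * |θ x| ^ p)
              * ∫ y : ℝ × ℝ in Ioo (0:ℝ) l1 ×ˢ Ioo (0:ℝ) G1, (1:ℝ) := by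
        rw [hPdef, Measure.volume_eq_prod]
        exact setIntegral_prod_mul (fun x : ℝ => K ^ p * |θ x| ^ p) (fun _ : ℝ × ℝ => (1:ℝ)) _ _
      rw [hre, hpm, setIntegral_const, smul_eq_mul, mul_one]
      have : ((volume : Measure (ℝ × ℝ)) (Ioo (0:ℝ) l1 ×ˢ Ioo (0:ℝ) G1)).toReal = l1 * G1 := by
        rw [Measure.volume_eq_prod, Measure.prod_prod, Real.volume_Ioo, Real.volume_Ioo, sub_zero,
          sub_zero, ← ENNReal.ofReal_mul hl1pos.le, ENNReal.toReal_ofReal (by positivity)]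
      rw [measureReal_def, this]
      have : ∫ x in Ioo (0:ℝ) 1, K ^ p * |θ x| ^ p = K ^ p * I := by
        rw [hIdef, integral_const_mul]
      rw [this]
    have hA : ∫ q in Wset G l, |ψ q| ^ p ≤ K ^ p * I * (l1 * G1) := by
      calc ∫ q in Wset G l, |ψ q| ^ p ≤ ∫ q in P, |ψ q| ^ p := step1
        _ ≤ ∫ q in P, (K * |θ q.1|) ^ p := step2
        _ = K ^ p * I * (l1 * G1) := step3
    have hA0 : 0 ≤ ∫ q in Wset G l, |ψ q| ^ p := integral_nonneg fun q => by positivity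
    have hrhs : (K ^ p * I * (l1 * G1)) ^ (1/p) = K * (l1 * G1) ^ (1/p) * I ^ (1/p) := by
      have hKp : (K ^ p) ^ (1/p) = K := by
        rw [← Real.rpow_mul hKpos.le, mul_one_div, div_self hpne, Real.rpow_one]
      rw [Real.mul_rpow (mul_nonneg (Real.rpow_nonneg hKpos.le p) hI0) (by positivity),
        Real.mul_rpow (Real.rpow_nonneg hKpos.le p) hI0, hKp]
      ring
    calc (∫ q in Wset G l, |ψ q| ^ p) ^ (1/p)
        ≤ (K ^ p * I * (l1 * G1)) ^ (1/p) := Real.rpow_le_rpow hA0 hA (by positivity)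
      _ = K * (l1 * G1) ^ (1/p) * I ^ (1/p) := hrhs
  · -- explicit formula
    funext q
    rw [hψdef, hvdef]
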